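/- Let an admissible chain-partition datum for e_1,…,e_M be given with β̂ ≠ 0, and set β = β̂/‖β̂‖². If j_1 ∈ Δ_{h_1,m_1} and j_2 ∈ Δ_{h_2,m_2} for (h_1,m_1), (h_2,m_2) ∈ J, then ⟪β, e_{j_1}⟫ < ⟪β, e_{j_2}⟫ if and only if (h_1,m_1) is strictly greater than (h_2,m_2) in the Hebrew lexicographic order, i.e. if and only if m_1 > m_2, or m_1 = m_2 and h_1 > h_2. -/

import Mathlib

open scoped RealInnerProductSpace BigOperators

/-- A chain-partition datum for the pairwise orthogonal nonzero vectors `e 0, …, e (M-1)`: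
a positive integer `L`, functions `l1 l2 : {1,…,L} → ℤ` with `l1 h ≤ l2 h`, and pairwise
disjoint nonempty subsets `Δ h m ⊆ {1,…,M}` for `(h,m)` in the index set
`J = {(h,m) : 1 ≤ h ≤ L, l1 h ≤ m ≤ l2 h}` whose union is `{1,…,M}`. -/
structure ChainPartitionDatum (M : ℕ) (V : Type*) [NormedAddCommGroup V]
    [InnerProductSpace ℝ V] (e : Fin M → V) where
  L : ℕ
  Lpos : 0 < L
  l1 : Fin L → ℤ
  l2 : Fin L → ℤ
  l1_le_l2 : ∀ h, l1 h ≤ l2 h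
  Δ : Fin L → ℤ → Finset (Fin M)
  Δ_nonempty : ∀ h m, l1 h ≤ m → m ≤ l2 h → (Δ h m).Nonempty
  Δ_disjoint : ∀ h m h' m', l1 h ≤ m → m ≤ l2 h → l1 h' ≤ m' → m' ≤ l2 h' →
    (h, m) ≠ (h', m') → Disjoint (Δ h m) (Δ h' m')
  Δ_union : ∀ i : Fin M, ∃ h m, l1 h ≤ m ∧ m ≤ l2 h ∧ i ∈ Δ h m

namespace ChainPartitionDatum

variable {V : Type*} [NormedAddCommGroup V] [InnerProductSpace ℝ V]
variable {M : ℕ} {e : Fin M → V}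

/-- `r h m = Σ_{j ∈ Δ_{h,m}} ‖e_j‖⁻²`. -/
noncomputable def r (D : ChainPartitionDatum M V e) (h : Fin D.L) (m : ℤ) : ℝ :=
  ∑ j ∈ D.Δ h m, (‖e j‖ ^ 2)⁻¹

/-- `ε h = (Σ_{m=l1 h}^{l2 h} m·r_{h,m}) / (Σ_{m=l1 h}^{l2 h} r_{h,m})`. -/
noncomputable def eps (D : ChainPartitionDatum M V e) (h : Fin D.L) : ℝ :=
  (∑ m ∈ Finset.Icc (D.l1 h) (D.l2 h), (m : ℝ) * D.r h m) /
    ∑ m ∈ Finset.Icc (D.l1 h) (D.l2 h), D.r h m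

/-- Admissibility: `−1/2 ≤ ε(h) < 1/2` for all `h` and `ε(1) > ε(2) > … > ε(L)`. -/
def Admissible (D : ChainPartitionDatum M V e) : Prop :=
  (∀ h, -(1 / 2 : ℝ) ≤ D.eps h ∧ D.eps h < 1 / 2) ∧ StrictAnti D.eps

/-- `β̂ = Σ_{h=1}^{L} Σ_{m=l1 h}^{l2 h} Σ_{j ∈ Δ_{h,m}} (ε(h) − m)·e_j/‖e_j‖²`. -/
noncomputable def betaHat (D : ChainPartitionDatum M V e) : V :=
  ∑ h : Fin D.L, ∑ m ∈ Finset.Icc (D.l1 h) (D.l2 h), ∑ j ∈ D.Δ h m,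
    ((D.eps h - (m : ℝ)) / ‖e j‖ ^ 2) • e j

end ChainPartitionDatum

/-- Auxiliary: `⟪β̂, e j₀⟫ = ε h₀ − m₀` for `j₀ ∈ Δ_{h₀,m₀}`. -/
lemma inner_betaHat_eq
    {V : Type*} [NormedAddCommGroup V] [InnerProductSpace ℝ V]
    {M : ℕ} (e : Fin M → V) (he : ∀ i, e i ≠ 0)
    (horth : ∀ i j : Fin M, i ≠ j → ⟪e i, e j⟫ = 0)
    (D : ChainPartitionDatum M V e)
    (h₀ : Fin D.L) (m₀ : ℤ) (hm : D.l1 h₀ ≤ m₀) (hm' : m₀ ≤ D.l2 h₀)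
    (j₀ : Fin M) (hj₀ : j₀ ∈ D.Δ h₀ m₀) :
    ⟪D.betaHat, e j₀⟫ = D.eps h₀ - m₀ := by
  have hnorm : (‖e j₀‖ : ℝ) ^ 2 ≠ 0 := by
    have : ‖e j₀‖ ≠ 0 := norm_ne_zero_iff.mpr (he j₀)
    positivity
  have hzero : ∀ (h : Fin D.L) (m : ℤ), m ∈ Finset.Icc (D.l1 h) (D.l2 h) →
      (h, m) ≠ (h₀, m₀) →
      (∑ j ∈ D.Δ h m, ((D.eps h - (m : ℝ)) / ‖e j‖ ^ 2) * ⟪e j, e j₀⟫) = 0 := by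
    intro h m hmem hne
    obtain ⟨h1, h2⟩ := Finset.mem_Icc.mp hmem
    apply Finset.sum_eq_zero
    intro j hj
    have hjj : j ≠ j₀ := by
      rintro rfl
      exact Finset.disjoint_left.mp (D.Δ_disjoint h m h₀ m₀ h1 h2 hm hm' hne) hj hj₀
    rw [horth j j₀ hjj, mul_zero]
  rw [ChainPartitionDatum.betaHat]
  simp only [sum_inner, real_inner_smul_left]
  rw [Finset.sum_eq_single h₀]
  · rw [Finset.sum_eq_single_of_mem m₀ (Finset.mem_Icc.mpr ⟨hm, hm'⟩)]
    · rw [Finset.sum_eq_single_of_mem j₀ hj₀]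
      · rw [real_inner_self_eq_norm_sq, div_mul_cancel₀ _ hnorm]
      · intro j _ hjne
        rw [horth j j₀ hjne, mul_zero]
    · intro m hmem hne
      exact hzero h₀ m hmem (by simp [hne])
  · intro h _ hne
    apply Finset.sum_eq_zero
    intro m hmem
    exact hzero h m hmem (by simp [hne])
  · intro habs
    exact absurd (Finset.mem_univ h₀) habs

/-- For an admissible chain-partition datum with `β̂ ≠ 0` and
`β = β̂/‖β̂‖²`, if `j₁ ∈ Δ_{h₁,m₁}` and `j₂ ∈ Δ_{h₂,m₂}` with `(h₁,m₁), (h₂,m₂) ∈ J`, then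
`⟪β, e_{j₁}⟫ < ⟪β, e_{j₂}⟫` iff `(h₁,m₁)` is strictly greater than `(h₂,m₂)` in the Hebrew
lexicographic order, i.e. iff `m₁ > m₂`, or `m₁ = m₂` and `h₁ > h₂`. -/
theorem inner_beta_lt_iff_hebrew_gt
    {V : Type*} [NormedAddCommGroup V] [InnerProductSpace ℝ V]
    {M : ℕ} (hM : 0 < M) (e : Fin M → V) (he : ∀ i, e i ≠ 0)
    (horth : ∀ i j : Fin M, i ≠ j → ⟪e i, e j⟫ = 0)
    (D : ChainPartitionDatum M V e) (hD : D.Admissible)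
    (hne : D.betaHat ≠ 0) (β : V) (hβ : β = (‖D.betaHat‖ ^ 2)⁻¹ • D.betaHat)
    (h₁ h₂ : Fin D.L) (m₁ m₂ : ℤ)
    (hm₁ : D.l1 h₁ ≤ m₁) (hm₁' : m₁ ≤ D.l2 h₁)
    (hm₂ : D.l1 h₂ ≤ m₂) (hm₂' : m₂ ≤ D.l2 h₂)
    (j₁ j₂ : Fin M) (hj₁ : j₁ ∈ D.Δ h₁ m₁) (hj₂ : j₂ ∈ D.Δ h₂ m₂) :
    ⟪β, e j₁⟫ < ⟪β, e j₂⟫ ↔ m₂ < m₁ ∨ (m₁ = m₂ ∧ h₂ < h₁) := by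
  subst hβ
  have hc : (0 : ℝ) < (‖D.betaHat‖ ^ 2)⁻¹ := by
    have : (0 : ℝ) < ‖D.betaHat‖ := norm_pos_iff.mpr hne
    positivity
  have e1 : ⟪D.betaHat, e j₁⟫ = D.eps h₁ - m₁ :=
    inner_betaHat_eq e he horth D h₁ m₁ hm₁ hm₁' j₁ hj₁
  have e2 : ⟪D.betaHat, e j₂⟫ = D.eps h₂ - m₂ :=
    inner_betaHat_eq e he horth D h₂ m₂ hm₂ hm₂' j₂ hj₂
  rw [real_inner_smul_left, real_inner_smul_left, e1, e2,
    mul_lt_mul_iff_right₀ hc]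
  have ha := hD.1 h₁
  have hb := hD.1 h₂
  have hlt : D.eps h₁ < D.eps h₂ ↔ h₂ < h₁ := hD.2.lt_iff_gt
  constructor
  · intro H
    rcases lt_trichotomy m₁ m₂ with h | h | h
    · exfalso
      have : (m₁ : ℝ) + 1 ≤ m₂ := by exact_mod_cast Int.add_one_le_iff.mpr h
      linarith [ha.1, hb.2]
    · subst h
      refine Or.inr ⟨rfl, hlt.mp ?_⟩
      linarith
    · exact Or.inl h
  · rintro (h | ⟨rfl, hh⟩)
    · have : (m₂ : ℝ) + 1 ≤ m₁ := by exact_mod_cast Int.add_one_le_iff.mpr h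
      linarith [ha.2, hb.1]
    · have := hlt.mpr hh
      linarith
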